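/- Local distribution determination: if f is a λ_h-eigenfunction of H(n,q) and |I| ≥ n - h is such that additionally h ≤ |I|, then the (Ī,α)-local weight enumerator g^{Ī,α}_f is a polynomial identity determined by g^{I,α}_f via g^{Ī,α}_f(x,y) = (x+(q-1)y)^{|Ī|-h} (x'+(q-1)y')^{h-|I|} g^{I,α}_f(x',y') — in particular, when h ≤ min(|I|, |Ī|) the local distribution of f in a face is uniquely determined by its local distribution in the orthogonal face. -/

import Mathlib

open Finset Matrix

noncomputable def xiq (q : ℕ) : ℂ := Complex.exp (2 * Real.pi * Complex.I / q)

/-- The character `φ^β(α) = ξ^{⟨α,β⟩}` on the q-ary Hamming space. -/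
noncomputable def chr (q n : ℕ) [NeZero q] (β α : Fin n → ZMod q) : ℂ :=
  xiq q ^ (∑ i, α i * β i : ZMod q).val

/-- Fourier transform `f̂(α) = ∑_β f(β) conj(ξ^{⟨α,β⟩})`. -/
noncomputable def ftr (q n : ℕ) [NeZero q] (f : (Fin n → ZMod q) → ℂ)
    (α : Fin n → ZMod q) : ℂ :=
  ∑ β : Fin n → ZMod q, f β * (starRingEnd ℂ) (chr q n β α)

/-- The face `Γ_I(α)` of the hypercube. -/
def face (q n : ℕ) [NeZero q] (I : Finset (Fin n)) (α : Fin n → ZMod q) :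
    Finset (Fin n → ZMod q) :=
  Finset.univ.filter (fun β => ∀ i ∉ I, β i = α i)

/-- The support `s(β)` of a vertex. -/
def supp (q n : ℕ) [NeZero q] (β : Fin n → ZMod q) : Finset (Fin n) :=
  Finset.univ.filter (fun i => β i ≠ 0)

/-- Local weight enumerator `g^{I,α}_f(x,y)`. -/
noncomputable def lwe (q n : ℕ) [NeZero q] (f : (Fin n → ZMod q) → ℂ)
    (I : Finset (Fin n)) (α : Fin n → ZMod q) (x y : ℂ) : ℂ :=
  ∑ β ∈ face q n I α, f β * y ^ hammingDist β α * x ^ (I.card - hammingDist β α)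

/-- `f` is an eigenfunction of the Hamming graph `H(n,q)` with eigenvalue `μ`. -/
def IsEigenfun (q n : ℕ) [NeZero q] (f : (Fin n → ZMod q) → ℂ) (μ : ℂ) : Prop :=
  ∀ α, ∑ β ∈ Finset.univ.filter (fun β => hammingDist α β = 1), f β = μ * f α

/-- Adjacency matrix of the Hamming graph `H(n,q)`. -/
noncomputable def adjM (q n : ℕ) [NeZero q] :
    Matrix (Fin n → ZMod q) (Fin n → ZMod q) ℂ :=
  fun α β => if hammingDist α β = 1 then 1 else 0

/-- Vertex-color incidence matrix of a coloring `c`. -/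
noncomputable def colM (q n r : ℕ) [NeZero q] (c : (Fin n → ZMod q) → Fin r) :
    Matrix (Fin n → ZMod q) (Fin r) ℂ :=
  fun α i => if c α = i then 1 else 0

noncomputable def eZ (q : ℕ) [NeZero q] (t : ZMod q) : ℂ := xiq q ^ t.val

section Aux
set_option linter.unusedSectionVars false
variable (q : ℕ) [NeZero q]

lemma xiq_prim : IsPrimitiveRoot (xiq q) q :=
  Complex.isPrimitiveRoot_exp q (NeZero.ne q)

lemma xiq_pow_q : xiq q ^ q = 1 := (xiq_prim q).pow_eq_one

lemma xiq_pow_mod (a : ℕ) : xiq q ^ a = xiq q ^ (a % q) := by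
  conv_lhs => rw [← Nat.div_add_mod a q]
  rw [pow_add, pow_mul, xiq_pow_q, one_pow, one_mul]

lemma eZ_zero : eZ q 0 = 1 := by simp [eZ]

lemma eZ_add (s t : ZMod q) : eZ q (s + t) = eZ q s * eZ q t := by
  rw [eZ, eZ, eZ, ZMod.val_add, ← xiq_pow_mod, pow_add]

lemma eZ_ne_zero (t : ZMod q) : eZ q t ≠ 0 :=
  pow_ne_zero _ (Complex.exp_ne_zero _)

lemma eZ_mul_neg (t : ZMod q) : eZ q t * eZ q (-t) = 1 := by
  rw [← eZ_add, add_neg_cancel, eZ_zero]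

lemma conj_eZ (t : ZMod q) : (starRingEnd ℂ) (eZ q t) = eZ q (-t) := by
  have h1 : (starRingEnd ℂ) (xiq q) = (xiq q)⁻¹ := by
    rw [xiq, ← Complex.exp_conj, ← Complex.exp_neg]
    congr 1
    simp [Complex.conj_ofNat]
    ring
  rw [eZ, map_pow, h1, inv_pow]
  refine inv_eq_of_mul_eq_one_left ?_
  show eZ q (-t) * eZ q t = 1
  rw [mul_comm]; exact eZ_mul_neg q t

lemma eZ_mul_pow (c d : ZMod q) : eZ q (c * d) = (xiq q ^ d.val) ^ c.val := by
  rw [eZ, ZMod.val_mul, ← xiq_pow_mod, ← pow_mul, mul_comm]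

lemma sum_eZ (d : ZMod q) : ∑ c : ZMod q, eZ q (c * d) = if d = 0 then (q : ℂ) else 0 := by
  have hb : ∑ c : ZMod q, eZ q (c * d) = ∑ i ∈ Finset.range q, (xiq q ^ d.val) ^ i := by
    refine Finset.sum_nbij' (fun c => c.val) (fun i => (i : ZMod q)) ?_ ?_ ?_ ?_ ?_
    · intro c _; exact Finset.mem_range.mpr (ZMod.val_lt c)
    · intro i _; exact Finset.mem_univ _
    · intro c _; simp [ZMod.natCast_val, ZMod.cast_id]
    · intro i hi; exact ZMod.val_cast_of_lt (Finset.mem_range.mp hi)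
    · intro c _; exact eZ_mul_pow q c d
  rw [hb]
  by_cases hd : d = 0
  · simp [hd, ZMod.val_zero]
  · have hv0 : 0 < d.val := ZMod.val_pos.mpr hd
    have hne1 : xiq q ^ d.val ≠ 1 :=
      (xiq_prim q).pow_ne_one_of_pos_of_lt hv0.ne' (ZMod.val_lt d)
    rw [geom_sum_eq hne1, if_neg hd, ← pow_mul, mul_comm, pow_mul, xiq_pow_q, one_pow,
      sub_self, zero_div]

lemma eZ_sum {ι : Type*} (s : Finset ι) (g : ι → ZMod q) :
    eZ q (∑ i ∈ s, g i) = ∏ i ∈ s, eZ q (g i) := by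
  induction s using Finset.cons_induction with
  | empty => simp [eZ_zero]
  | cons a s ha ih => rw [Finset.sum_cons, Finset.prod_cons, eZ_add, ih]

variable (n : ℕ)

lemma chr_eq (β α : Fin n → ZMod q) : chr q n β α = eZ q (∑ i, α i * β i) := rfl

lemma sum_chr_aux (δ : Fin n → ZMod q) :
    ∑ γ : Fin n → ZMod q, eZ q (∑ i, γ i * δ i) = if δ = 0 then (q : ℂ) ^ n else 0 := by
  have h1 : ∀ γ : Fin n → ZMod q, eZ q (∑ i, γ i * δ i) = ∏ i, eZ q (γ i * δ i) :=
    fun γ => eZ_sum q _ _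
  simp_rw [h1]
  rw [← Fintype.prod_sum (κ := fun _ : Fin n => ZMod q) (fun i c => eZ q (c * δ i))]
  simp_rw [sum_eZ]
  by_cases hδ : δ = 0
  · subst hδ; simp
  · rw [if_neg hδ]
    obtain ⟨i, hi⟩ := Function.ne_iff.mp hδ
    exact Finset.prod_eq_zero (Finset.mem_univ i) (if_neg hi)

lemma ip_update (β γ : Fin n → ZMod q) (i : Fin n) (v : ZMod q) :
    (∑ j, γ j * Function.update β i v j) = (∑ j, γ j * β j) + γ i * (v - β i) := by
  have key : ∀ w : ZMod q, (fun j => γ j * Function.update β i w j)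
      = Function.update (fun j => γ j * β j) i (γ i * w) := by
    intro w; funext j
    rcases eq_or_ne j i with rfl | hj
    · simp
    · simp [Function.update_of_ne hj]
  rw [key v, Finset.sum_update_of_mem (Finset.mem_univ i),
    ← Finset.add_sum_erase Finset.univ (fun j => γ j * β j) (Finset.mem_univ i),
    Finset.sdiff_singleton_eq_erase]
  ring

lemma chr_update (β γ : Fin n → ZMod q) (i : Fin n) (v : ZMod q) :
    chr q n (Function.update β i v) γ = chr q n β γ * eZ q (γ i * (v - β i)) := by
  rw [chr_eq, chr_eq, ip_update, eZ_add]

lemma hd_eq (x y : Fin n → ZMod q) :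
    hammingDist x y = (Finset.univ.filter fun i => x i ≠ y i).card := rfl

lemma dist_update (β : Fin n → ZMod q) (i : Fin n) (c : ZMod q) (hc : c ≠ 0) :
    hammingDist β (Function.update β i (β i + c)) = 1 := by
  rw [hd_eq]
  have : (Finset.univ.filter fun j => β j ≠ Function.update β i (β i + c) j) = {i} := by
    ext j
    rcases eq_or_ne j i with rfl | hj
    · simp [hc]
    · simp [Function.update_of_ne hj, hj]
  rw [this, Finset.card_singleton]

lemma sum_neighbors (β : Fin n → ZMod q) (g : (Fin n → ZMod q) → ℂ) :
    ∑ α ∈ Finset.univ.filter (fun α => hammingDist β α = 1), g α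
    = ∑ p ∈ (Finset.univ : Finset (Fin n)) ×ˢ (Finset.univ.filter (fun c : ZMod q => c ≠ 0)),
        g (Function.update β p.1 (β p.1 + p.2)) := by
  refine (Finset.sum_bij (fun p _ => Function.update β p.1 (β p.1 + p.2)) ?_ ?_ ?_ ?_).symm
  · rintro ⟨i, c⟩ hp
    simp only [Finset.mem_product, Finset.mem_filter] at hp
    simp only [Finset.mem_filter, Finset.mem_univ, true_and]
    exact dist_update q n β i c hp.2.2
  · rintro ⟨i, c⟩ hp ⟨i', c'⟩ hp' he
    simp only [Finset.mem_product, Finset.mem_filter] at hp hp'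
    dsimp only at he
    rcases eq_or_ne i i' with rfl | hii
    · have h2 := congrFun he i
      rw [Function.update_self, Function.update_self] at h2
      exact Prod.ext rfl (add_left_cancel h2)
    · exfalso
      have h1 := congrFun he i
      rw [Function.update_self, Function.update_of_ne hii] at h1
      exact hp.2.2 (by simpa using h1)
  · intro α hα
    simp only [Finset.mem_filter, Finset.mem_univ, true_and] at hα
    rw [hd_eq] at hα
    obtain ⟨i, hi⟩ := Finset.card_eq_one.mp hα
    have him : i ∈ ({i} : Finset (Fin n)) := Finset.mem_singleton_self i
    rw [← hi] at him
    simp only [Finset.mem_filter, Finset.mem_univ, true_and] at him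
    refine ⟨⟨i, α i - β i⟩, ?_, ?_⟩
    · simp only [Finset.mem_product, Finset.mem_filter, Finset.mem_univ, true_and]
      exact sub_ne_zero.mpr (Ne.symm him)
    · dsimp only
      funext j
      rcases eq_or_ne j i with rfl | hj
      · simp
      · rw [Function.update_of_ne hj]
        by_contra hne
        have : j ∈ (Finset.univ.filter fun k => β k ≠ α k) := by
          simp [hne]
        rw [hi] at this
        exact hj (Finset.mem_singleton.mp this)
  · intro p _; rfl

lemma ftr_neigh (f : (Fin n → ZMod q) → ℂ) (γ : Fin n → ZMod q) :
    ftr q n (fun α => ∑ β ∈ Finset.univ.filter (fun β => hammingDist α β = 1), f β) γ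
    = (((q : ℂ) - 1) * n - (q : ℂ) * ((supp q n γ).card : ℂ)) * ftr q n f γ := by
  unfold ftr
  have step1 : ∑ α : Fin n → ZMod q,
      (∑ β ∈ Finset.univ.filter (fun β => hammingDist α β = 1), f β) * (starRingEnd ℂ) (chr q n α γ)
      = ∑ β : Fin n → ZMod q, f β *
          ∑ α ∈ Finset.univ.filter (fun α => hammingDist β α = 1), (starRingEnd ℂ) (chr q n α γ) := by
    simp_rw [Finset.sum_mul, Finset.sum_filter, Finset.mul_sum]
    rw [Finset.sum_comm]
    refine Finset.sum_congr rfl fun β _ => Finset.sum_congr rfl fun α _ => ?_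
    rw [hammingDist_comm, mul_ite, mul_zero]
  rw [step1]
  have step2 : ∀ β : Fin n → ZMod q,
      ∑ α ∈ Finset.univ.filter (fun α => hammingDist β α = 1), (starRingEnd ℂ) (chr q n α γ)
      = (starRingEnd ℂ) (chr q n β γ) *
          (((q : ℂ) - 1) * n - (q : ℂ) * ((supp q n γ).card : ℂ)) := by
    intro β
    rw [sum_neighbors q n β]
    have hterm : ∀ p : Fin n × ZMod q,
        (starRingEnd ℂ) (chr q n (Function.update β p.1 (β p.1 + p.2)) γ)
        = (starRingEnd ℂ) (chr q n β γ) * eZ q (p.2 * (-γ p.1)) := by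
      rintro ⟨i, c⟩
      rw [chr_update, _root_.map_mul, add_sub_cancel_left, conj_eZ]
      congr 1
      ring
    rw [Finset.sum_congr rfl (fun p _ => hterm p), ← Finset.mul_sum]
    congr 1
    rw [Finset.sum_product]
    have inner : ∀ i : Fin n,
        ∑ c ∈ Finset.univ.filter (fun c : ZMod q => c ≠ 0), eZ q (c * (-γ i))
        = (if γ i = 0 then (q : ℂ) else 0) - 1 := by
      intro i
      have : (Finset.univ.filter (fun c : ZMod q => c ≠ 0)) = Finset.univ.erase 0 := by
        ext c; simp [Finset.mem_erase, and_comm]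
      rw [this, Finset.sum_erase_eq_sub (Finset.mem_univ 0), sum_eZ, zero_mul, eZ_zero]
      simp only [neg_eq_zero]
    rw [Finset.sum_congr rfl (fun i _ => inner i), Finset.sum_sub_distrib, Finset.sum_const,
      Finset.card_univ, Fintype.card_fin, ← Finset.sum_filter, Finset.sum_const,
      nsmul_eq_mul, nsmul_eq_mul]
    have hcards : (Finset.univ.filter fun i : Fin n => γ i = 0).card + (supp q n γ).card = n := by
      rw [supp]
      simpa using Finset.card_filter_add_card_filter_not
        (s := (Finset.univ : Finset (Fin n))) (p := fun i => γ i = 0)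
    have hc : ((Finset.univ.filter fun i : Fin n => γ i = 0).card : ℂ)
        = (n : ℂ) - ((supp q n γ).card : ℂ) := by
      have := congrArg (Nat.cast : ℕ → ℂ) hcards
      push_cast at this
      linear_combination this
    rw [hc]; ring
  rw [Finset.sum_congr rfl (fun β _ => by rw [step2 β]), Finset.mul_sum]
  refine Finset.sum_congr rfl fun β _ => by ring

lemma ftr_vanish (h : ℕ) (f : (Fin n → ZMod q) → ℂ)
    (hf : IsEigenfun q n f (((q : ℂ) - 1) * n - (q : ℂ) * h))
    (γ : Fin n → ZMod q) (hγ : (supp q n γ).card ≠ h) : ftr q n f γ = 0 := by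
  have h1 := ftr_neigh q n f γ
  have h2 : (fun α => ∑ β ∈ Finset.univ.filter (fun β => hammingDist α β = 1), f β)
      = fun α => (((q : ℂ) - 1) * n - (q : ℂ) * h) * f α := funext hf
  rw [h2] at h1
  have h3 : ftr q n (fun α => (((q : ℂ) - 1) * n - (q : ℂ) * h) * f α) γ
      = (((q : ℂ) - 1) * n - (q : ℂ) * h) * ftr q n f γ := by
    unfold ftr
    rw [Finset.mul_sum]
    exact Finset.sum_congr rfl fun β _ => by ring
  rw [h3] at h1
  have h4 : ((q : ℂ) * (((supp q n γ).card : ℂ) - (h : ℂ))) * ftr q n f γ = 0 := by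
    linear_combination h1
  rcases mul_eq_zero.mp h4 with h5 | h5
  · exfalso
    rcases mul_eq_zero.mp h5 with h6 | h6
    · exact NeZero.ne q (Nat.cast_injective (h6.trans Nat.cast_zero.symm))
    · exact hγ (Nat.cast_injective (by linear_combination h6 : ((supp q n γ).card : ℂ) = h))
  · exact h5

lemma inversion (f : (Fin n → ZMod q) → ℂ) (β : Fin n → ZMod q) :
    (q : ℂ) ^ n * f β = ∑ γ : Fin n → ZMod q, ftr q n f γ * chr q n β γ := by
  have key : ∀ δ γ : Fin n → ZMod q,
      (starRingEnd ℂ) (chr q n δ γ) * chr q n β γ = eZ q (∑ i, γ i * (β - δ) i) := by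
    intro δ γ
    rw [chr_eq, chr_eq, conj_eZ, ← eZ_add]
    congr 1
    rw [neg_add_eq_sub, ← Finset.sum_sub_distrib]
    exact Finset.sum_congr rfl fun i _ => (mul_sub (γ i) (β i) (δ i)).symm
  symm
  calc ∑ γ : Fin n → ZMod q, ftr q n f γ * chr q n β γ
      = ∑ γ : Fin n → ZMod q, ∑ δ : Fin n → ZMod q,
          f δ * ((starRingEnd ℂ) (chr q n δ γ) * chr q n β γ) := by
        refine Finset.sum_congr rfl fun γ _ => ?_
        rw [ftr, Finset.sum_mul]
        exact Finset.sum_congr rfl fun δ _ => by ring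
    _ = ∑ δ : Fin n → ZMod q, f δ * ∑ γ : Fin n → ZMod q, eZ q (∑ i, γ i * (β - δ) i) := by
        rw [Finset.sum_comm]
        exact Finset.sum_congr rfl fun δ _ => by
          rw [Finset.mul_sum]
          exact Finset.sum_congr rfl fun γ _ => by rw [key]
    _ = ∑ δ : Fin n → ZMod q, (if δ = β then (q : ℂ) ^ n * f δ else 0) := by
        refine Finset.sum_congr rfl fun δ _ => ?_
        rw [sum_chr_aux]
        have h0 : (β - δ = 0) ↔ (δ = β) := by
          simp [sub_eq_zero, eq_comm]
        by_cases hd : δ = β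
        · rw [if_pos (h0.mpr hd), if_pos hd]; ring
        · rw [if_neg (fun hh => hd (h0.mp hh)), if_neg hd]; ring
    _ = (q : ℂ) ^ n * f β := by
        rw [Finset.sum_ite_eq' Finset.univ β fun δ => (q : ℂ) ^ n * f δ]
        simp

lemma face_empty (α : Fin n → ZMod q) : face q n ∅ α = {α} := by
  ext β
  simp only [face, Finset.mem_filter, Finset.mem_univ, true_and, Finset.notMem_empty,
    not_false_iff, forall_true_left, Finset.mem_singleton]
  constructor
  · intro hb; funext i; exact hb i
  · intro hb i; rw [hb]

lemma lwe_empty (F : (Fin n → ZMod q) → ℂ) (α : Fin n → ZMod q) (x y : ℂ) :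
    lwe q n F ∅ α x y = F α := by
  rw [lwe, face_empty, Finset.sum_singleton]
  simp

lemma mem_face_dist_le (I : Finset (Fin n)) (α β : Fin n → ZMod q) (hβ : β ∈ face q n I α) :
    hammingDist β α ≤ I.card := by
  rw [hd_eq]
  refine Finset.card_le_card fun j hj => ?_
  simp only [Finset.mem_filter, Finset.mem_univ, true_and] at hj
  simp only [face, Finset.mem_filter, Finset.mem_univ, true_and] at hβ
  by_contra hjI
  exact hj (hβ j hjI)

lemma face_fiber (I : Finset (Fin n)) (α : Fin n → ZMod q) (i : Fin n) (hi : i ∉ I) (b : ZMod q) :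
    (face q n (insert i I) α).filter (fun β => β i = b) = face q n I (Function.update α i b) := by
  ext β
  simp only [face, Finset.mem_filter, Finset.mem_univ, true_and, Finset.mem_insert]
  constructor
  · rintro ⟨h1, h2⟩ j hj
    rcases eq_or_ne j i with rfl | hji
    · rw [Function.update_self]; exact h2
    · rw [Function.update_of_ne hji]
      exact h1 j (by push_neg; exact ⟨hji, hj⟩)
  · intro hb
    constructor
    · intro j hj
      push_neg at hj
      have := hb j hj.2
      rwa [Function.update_of_ne hj.1] at this
    · have := hb i hi
      rwa [Function.update_self] at this

lemma dist_face (I : Finset (Fin n)) (α : Fin n → ZMod q) (i : Fin n) (hi : i ∉ I) (b : ZMod q)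
    (β : Fin n → ZMod q) (hβ : β ∈ face q n I (Function.update α i b)) :
    hammingDist β α = hammingDist β (Function.update α i b) + (if b = α i then 0 else 1) := by
  have hβi : β i = b := by
    simp only [face, Finset.mem_filter, Finset.mem_univ, true_and] at hβ
    have := hβ i hi
    rwa [Function.update_self] at this
  by_cases hb : b = α i
  · subst hb
    rw [Function.update_eq_self, if_pos rfl, add_zero]
  · rw [if_neg hb, hd_eq, hd_eq]
    have hkey : (Finset.univ.filter fun j => β j ≠ α j)
        = insert i (Finset.univ.filter fun j => β j ≠ Function.update α i b j) := by
      ext j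
      simp only [Finset.mem_filter, Finset.mem_univ, true_and, Finset.mem_insert]
      rcases eq_or_ne j i with rfl | hji
      · simp [hβi, hb]
      · rw [Function.update_of_ne hji]
        simp [hji]
    have hnotmem : i ∉ (Finset.univ.filter fun j => β j ≠ Function.update α i b j) := by
      simp [hβi]
    rw [hkey, Finset.card_insert_of_notMem hnotmem]

lemma lwe_insert (F : (Fin n → ZMod q) → ℂ) (I : Finset (Fin n)) (α : Fin n → ZMod q)
    (i : Fin n) (hi : i ∉ I) (x y : ℂ) :
    lwe q n F (insert i I) α x y
    = ∑ b : ZMod q, (if b = α i then x else y) * lwe q n F I (Function.update α i b) x y := by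
  rw [lwe, ← Finset.sum_fiberwise (face q n (insert i I) α) (fun β => β i)
    (fun β => F β * y ^ hammingDist β α * x ^ ((insert i I).card - hammingDist β α))]
  refine Finset.sum_congr rfl fun b _ => ?_
  rw [face_fiber q n I α i hi b, lwe, Finset.mul_sum]
  refine Finset.sum_congr rfl fun β hβ => ?_
  have hd := dist_face q n I α i hi b β hβ
  have hle := mem_face_dist_le q n I (Function.update α i b) β hβ
  rw [hd, Finset.card_insert_of_notMem hi]
  by_cases hb : b = α i
  · rw [if_pos hb, if_pos hb, add_zero]
    have : I.card + 1 - hammingDist β (Function.update α i b) =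
        (I.card - hammingDist β (Function.update α i b)) + 1 := by omega
    rw [this, pow_succ]
    ring
  · rw [if_neg hb, if_neg hb]
    have : I.card + 1 - (hammingDist β (Function.update α i b) + 1) =
        I.card - hammingDist β (Function.update α i b) := by omega
    rw [this, pow_succ]
    ring

lemma sum_factor (γi : ZMod q) (αi : ZMod q) (x y : ℂ) :
    ∑ b : ZMod q, (if b = αi then x else y) * eZ q (γi * (b - αi))
    = if γi = 0 then x + ((q : ℂ) - 1) * y else x - y := by
  have hre : ∑ b : ZMod q, (if b = αi then x else y) * eZ q (γi * (b - αi))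
      = ∑ c : ZMod q, (if c = 0 then x else y) * eZ q (γi * c) := by
    refine Fintype.sum_equiv (Equiv.subRight αi) _ _ fun b => ?_
    simp only [Equiv.subRight_apply]
    by_cases hb : b = αi
    · rw [if_pos hb, if_pos (by rw [hb, sub_self])]
    · rw [if_neg hb, if_neg (fun hh => hb (sub_eq_zero.mp hh))]
  rw [hre]
  have hsplit : ∀ c : ZMod q, (if c = 0 then x else y) * eZ q (γi * c)
      = y * eZ q (c * γi) + (if c = 0 then (x - y) * eZ q (γi * c) else 0) := by
    intro c
    rcases eq_or_ne c 0 with rfl | hc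
    · simp only [mul_zero, zero_mul, if_pos rfl, eq_self_iff_true, if_true]; ring
    · rw [if_neg hc, if_neg hc, mul_comm γi c]; ring
  rw [Finset.sum_congr rfl fun c _ => hsplit c, Finset.sum_add_distrib, ← Finset.mul_sum,
    sum_eZ, Finset.sum_ite_eq' Finset.univ (0 : ZMod q)
      (fun c => (x - y) * eZ q (γi * c))]
  simp only [Finset.mem_univ, if_true, mul_zero, eZ_zero, mul_one]
  by_cases hγ : γi = 0
  · rw [if_pos hγ, if_pos hγ]; ring
  · rw [if_neg hγ, if_neg hγ]; ring

lemma lwe_chr (γ : Fin n → ZMod q) (x y : ℂ) (I : Finset (Fin n)) :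
    ∀ α : Fin n → ZMod q, lwe q n (fun β => chr q n β γ) I α x y
    = chr q n α γ * (x + ((q : ℂ) - 1) * y) ^ (I.card - (I.filter fun j => γ j ≠ 0).card)
        * (x - y) ^ ((I.filter fun j => γ j ≠ 0).card) := by
  induction I using Finset.induction_on with
  | empty =>
    intro α
    rw [lwe_empty]
    simp
  | @insert i I hi ih =>
    intro α
    rw [lwe_insert q n _ I α i hi]
    have step : ∀ b : ZMod q,
        (if b = α i then x else y) * lwe q n (fun β => chr q n β γ) I (Function.update α i b) x y
        = (chr q n α γ * (x + ((q : ℂ) - 1) * y) ^ (I.card - (I.filter fun j => γ j ≠ 0).card)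
            * (x - y) ^ ((I.filter fun j => γ j ≠ 0).card))
          * ((if b = α i then x else y) * eZ q (γ i * (b - α i))) := by
      intro b
      rw [ih, chr_update]
      ring
    rw [Finset.sum_congr rfl fun b _ => step b, ← Finset.mul_sum, sum_factor]
    have hwle : (I.filter fun j => γ j ≠ 0).card ≤ I.card := Finset.card_filter_le _ _
    have hcard : (insert i I).card = I.card + 1 := Finset.card_insert_of_notMem hi
    by_cases hγ : γ i = 0
    · rw [if_pos hγ]
      have hfil : ((insert i I).filter fun j => γ j ≠ 0) = I.filter fun j => γ j ≠ 0 := by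
        rw [Finset.filter_insert, if_neg (by simpa using hγ)]
      rw [hfil, hcard]
      have : I.card + 1 - (I.filter fun j => γ j ≠ 0).card
          = (I.card - (I.filter fun j => γ j ≠ 0).card) + 1 := by omega
      rw [this, pow_succ]
      ring
    · rw [if_neg hγ]
      have hnm : i ∉ (I.filter fun j => γ j ≠ 0) := fun hmem => hi (Finset.mem_of_mem_filter i hmem)
      have hfil : ((insert i I).filter fun j => γ j ≠ 0).card
          = (I.filter fun j => γ j ≠ 0).card + 1 := by
        rw [Finset.filter_insert, if_pos (by simpa using hγ), Finset.card_insert_of_notMem hnm]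
      rw [hfil, hcard]
      have : I.card + 1 - ((I.filter fun j => γ j ≠ 0).card + 1)
          = I.card - (I.filter fun j => γ j ≠ 0).card := by omega
      rw [this, pow_succ]
      ring

lemma lwe_lin (f : (Fin n → ZMod q) → ℂ) (I : Finset (Fin n)) (α : Fin n → ZMod q) (x y : ℂ) :
    (q : ℂ) ^ n * lwe q n f I α x y
    = ∑ γ : Fin n → ZMod q, ftr q n f γ * lwe q n (fun β => chr q n β γ) I α x y := by
  rw [lwe, Finset.mul_sum]
  have step : ∀ β ∈ face q n I α,
      (q : ℂ) ^ n * (f β * y ^ hammingDist β α * x ^ (I.card - hammingDist β α))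
      = ∑ γ : Fin n → ZMod q, ftr q n f γ *
          (chr q n β γ * y ^ hammingDist β α * x ^ (I.card - hammingDist β α)) := by
    intro β _
    rw [show (q : ℂ) ^ n * (f β * y ^ hammingDist β α * x ^ (I.card - hammingDist β α))
        = ((q : ℂ) ^ n * f β) * (y ^ hammingDist β α * x ^ (I.card - hammingDist β α)) by ring,
      inversion, Finset.sum_mul]
    exact Finset.sum_congr rfl fun γ _ => by ring
  rw [Finset.sum_congr rfl step, Finset.sum_comm]
  refine Finset.sum_congr rfl fun γ _ => ?_
  rw [lwe, Finset.mul_sum]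

lemma supp_split (γ : Fin n → ZMod q) (I : Finset (Fin n)) :
    (supp q n γ).card
    = (I.filter fun j => γ j ≠ 0).card + (Iᶜ.filter fun j => γ j ≠ 0).card := by
  rw [supp, ← Finset.card_union_of_disjoint
    (Finset.disjoint_filter_filter disjoint_compl_right), ← Finset.filter_union,
    Finset.union_compl]

end Aux

/-- When `h ≤ min(|I|,|Ī|)`, the local distribution of a `λ_h`-eigenfunction in
a face is determined by its local distribution in the orthogonal face:
`(x'+(q-1)y')^{|I|-h} g^{Ī,α}_f(x,y) = (x+(q-1)y)^{|Ī|-h} g^{I,α}_f(x',y')`. -/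
theorem stmt_17 (q n : ℕ) [NeZero q] (hq : 2 ≤ q) (h : ℕ)
    (f : (Fin n → ZMod q) → ℂ)
    (hf : IsEigenfun q n f (((q : ℂ) - 1) * n - (q : ℂ) * h))
    (α : Fin n → ZMod q) (I : Finset (Fin n))
    (hI : h ≤ I.card) (hIc : h ≤ Iᶜ.card) (x y : ℂ) :
    ((x + ((q : ℂ) - 2) * y) + ((q : ℂ) - 1) * (-y)) ^ (I.card - h) *
      lwe q n f Iᶜ α x y
    = (x + ((q : ℂ) - 1) * y) ^ (Iᶜ.card - h) *
        lwe q n f I α (x + ((q : ℂ) - 2) * y) (-y) := by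
  have hxy : (x + ((q : ℂ) - 2) * y) + ((q : ℂ) - 1) * (-y) = x - y := by ring
  rw [hxy]
  have hq0 : ((q : ℂ)) ^ n ≠ 0 := pow_ne_zero _ (Nat.cast_ne_zero.mpr (NeZero.ne q))
  apply mul_left_cancel₀ hq0
  rw [show (q : ℂ) ^ n * ((x - y) ^ (I.card - h) * lwe q n f Iᶜ α x y)
      = (x - y) ^ (I.card - h) * ((q : ℂ) ^ n * lwe q n f Iᶜ α x y) by ring,
    show (q : ℂ) ^ n * ((x + ((q : ℂ) - 1) * y) ^ (Iᶜ.card - h) *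
        lwe q n f I α (x + ((q : ℂ) - 2) * y) (-y))
      = (x + ((q : ℂ) - 1) * y) ^ (Iᶜ.card - h) *
        ((q : ℂ) ^ n * lwe q n f I α (x + ((q : ℂ) - 2) * y) (-y)) by ring,
    lwe_lin, lwe_lin, Finset.mul_sum, Finset.mul_sum]
  refine Finset.sum_congr rfl fun γ _ => ?_
  by_cases hγ : (supp q n γ).card = h
  · rw [lwe_chr, lwe_chr]
    have hB : (x + ((q : ℂ) - 2) * y) + ((q : ℂ) - 1) * (-y) = x - y := by ring
    have hA : (x + ((q : ℂ) - 2) * y) - (-y) = x + ((q : ℂ) - 1) * y := by ring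
    rw [hB, hA]
    set wI := (I.filter fun j => γ j ≠ 0).card with hwI
    set wc := (Iᶜ.filter fun j => γ j ≠ 0).card with hwc
    have hsum : wI + wc = h := by rw [hwI, hwc, ← supp_split, hγ]
    have hwIle : wI ≤ I.card := Finset.card_filter_le _ _
    have hwcle : wc ≤ Iᶜ.card := Finset.card_filter_le _ _
    have e1 : I.card - h + wc = I.card - wI := by omega
    have e2 : Iᶜ.card - wc = (Iᶜ.card - h) + wI := by omega
    rw [show (x - y) ^ (I.card - h) *
        (ftr q n f γ * (chr q n α γ * (x + ((q : ℂ) - 1) * y) ^ (Iᶜ.card - wc)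
          * (x - y) ^ wc))
      = ftr q n f γ * chr q n α γ * (x + ((q : ℂ) - 1) * y) ^ (Iᶜ.card - wc)
          * ((x - y) ^ (I.card - h) * (x - y) ^ wc) by ring,
      ← pow_add, e1, e2, pow_add]
    ring
  · rw [ftr_vanish q n h f hf γ hγ]
    ring
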